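/- arXiv:0906.0121 — 5 statements merged into one kernel-verified Lean document; each statement's English description precedes it below -/
import Mathlib

section
/- Let g be a finite-dimensional real Lie algebra whose Killing form κ is negative definite. Let h′ ⊆ h be Lie subalgebras of g, let p = {x ∈ g : κ(x,y) = 0 ∀y ∈ h} and p′ = {x ∈ g : κ(x,y) = 0 ∀y ∈ h′} be their κ-orthogonal complements, and assume the decomposition relative to h is symmetric, i.e. ⁅p, p⁆ ⊆ h. If there exist x ∈ p and y ∈ p′ ∩ h with ⁅x, y⁆ ≠ 0, then the decomposition relative to h′ is not symmetric, i.e. ⁅p′, p′⁆ ⊄ h′. (In other words, a symmetric orthogonal decomposition forces the subalgebra to be maximal among subalgebras admitting symmetric decompositions.) -/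
/-- In a compact real Lie algebra (Killing form negative definite),
a symmetric orthogonal decomposition `g = h ⊕ p` (with `⁅p,p⁆ ⊆ h`) forces maximality:
if `h' ⊆ h` is a smaller subalgebra and there are `x ∈ p`, `y ∈ p' ∩ h` with
`⁅x,y⁆ ≠ 0`, then the decomposition relative to `h'` is not symmetric. -/
theorem symmetric_decomposition_maximal
    (g : Type*) [LieRing g] [LieAlgebra ℝ g] [Module.Finite ℝ g]
    (hneg : ∀ x : g, x ≠ 0 → killingForm ℝ g x x < 0)
    (h h' : LieSubalgebra ℝ g) (hsub : h' ≤ h)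
    (p p' : Set g)
    (hp : p = {x : g | ∀ y ∈ h, killingForm ℝ g x y = 0})
    (hp' : p' = {x : g | ∀ y ∈ h', killingForm ℝ g x y = 0})
    (hsym : ∀ a ∈ p, ∀ b ∈ p, ⁅a, b⁆ ∈ h)
    (x y : g) (hx : x ∈ p) (hy : y ∈ p' ∩ (h : Set g)) (hxy : ⁅x, y⁆ ≠ (0 : g)) :
    ¬ (∀ a ∈ p', ∀ b ∈ p', ⁅a, b⁆ ∈ h') := by
  intro H
  obtain ⟨hyp', hyh⟩ := hy
  -- x ∈ p ⊆ p'
  have hxp' : x ∈ p' := by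
    rw [hp'] at *
    rw [hp] at hx
    exact fun z hz => hx z (hsub hz)
  -- so ⁅x, y⁆ ∈ h' ⊆ h
  have hb : ⁅x, y⁆ ∈ h := hsub (H x hxp' y hyp')
  -- but ⁅x, y⁆ ∈ p since y ∈ h and x ∈ p, by invariance of the Killing form
  have hbp : killingForm ℝ g ⁅x, y⁆ ⁅x, y⁆ = 0 := by
    rw [LieModule.traceForm_apply_lie_apply]
    rw [hp] at hx
    exact hx _ (h.lie_mem hyh hb)
  exact absurd hbp (ne_of_lt (hneg _ hxy))
end

section
/- Every element A of the special unitary group SU(2) (the group of 2×2 complex unitary matrices of determinant 1) can be written in Euler form: there exist φ ∈ [0, 2π], θ ∈ [0, π], ψ ∈ [0, 4π] such that A = exp(iφσ₃/2)·exp(iθσ₁/2)·exp(iψσ₃/2). -/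
open Matrix Complex

/-- The Pauli matrix σ₁. -/
def pauli1 : Matrix (Fin 2) (Fin 2) ℂ := !![0, 1; 1, 0]

/-- The Pauli matrix σ₃. -/
def pauli3 : Matrix (Fin 2) (Fin 2) ℂ := !![1, 0; 0, -1]

lemma exp_pauli3 (c : ℂ) :
    NormedSpace.exp (c • pauli3) = !![Complex.exp c, 0; 0, Complex.exp (-c)] := by
  have h : c • pauli3 = Matrix.diagonal ![c, -c] := by
    ext i j; fin_cases i <;> fin_cases j <;>
      simp [pauli3, Matrix.diagonal]
  rw [h, Matrix.exp_diagonal]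
  ext i j; fin_cases i <;> fin_cases j <;>
    simp [Matrix.diagonal, ← Complex.exp_eq_exp_ℂ]

lemma exp_pauli1 (c : ℂ) :
    NormedSpace.exp (c • pauli1) =
      !![Complex.cosh c, Complex.sinh c; Complex.sinh c, Complex.cosh c] := by
  have hU : IsUnit (!![1,1;1,-1] : Matrix (Fin 2) (Fin 2) ℂ) := by
    rw [Matrix.isUnit_iff_isUnit_det]
    simp [Matrix.det_fin_two_of]
    norm_num
  have hinv : (!![1,1;1,-1] : Matrix (Fin 2) (Fin 2) ℂ)⁻¹ = !![1/2,1/2;1/2,-1/2] := by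
    apply Matrix.inv_eq_right_inv
    norm_num [Matrix.mul_fin_two]
    rw [show (1 : Matrix (Fin 2) (Fin 2) ℂ) = !![1,0;0,1] from Matrix.one_fin_two]
  have hconj : c • pauli1 = !![1,1;1,-1] * (c • pauli3) * (!![1,1;1,-1] : Matrix (Fin 2) (Fin 2) ℂ)⁻¹ := by
    rw [hinv]
    ext i j; fin_cases i <;> fin_cases j <;>
      simp [pauli1, pauli3, Matrix.mul_apply, Fin.sum_univ_two] <;> ring
  rw [hconj, Matrix.exp_conj _ _ hU, exp_pauli3, hinv]
  ext i j; fin_cases i <;> fin_cases j <;>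
    simp [Matrix.mul_apply, Fin.sum_univ_two, Complex.cosh, Complex.sinh] <;> ring

lemma euler_prod (φ θ ψ : ℝ) :
    NormedSpace.exp ((Complex.I * (φ : ℂ) / 2) • pauli3) *
      NormedSpace.exp ((Complex.I * (θ : ℂ) / 2) • pauli1) *
      NormedSpace.exp ((Complex.I * (ψ : ℂ) / 2) • pauli3) =
    !![Complex.exp (I*φ/2) * Complex.exp (I*ψ/2) * Complex.cos ((θ:ℂ)/2),
       Complex.exp (I*φ/2) * Complex.exp (-(I*ψ/2)) * (I * Complex.sin ((θ:ℂ)/2));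
       Complex.exp (-(I*φ/2)) * Complex.exp (I*ψ/2) * (I * Complex.sin ((θ:ℂ)/2)),
       Complex.exp (-(I*φ/2)) * Complex.exp (-(I*ψ/2)) * Complex.cos ((θ:ℂ)/2)] := by
  have hc : Complex.cosh (I*(θ:ℂ)/2) = Complex.cos ((θ:ℂ)/2) := by
    rw [show (I*(θ:ℂ)/2 : ℂ) = ((θ:ℂ)/2) * I by ring, Complex.cosh_mul_I]
  have hs : Complex.sinh (I*(θ:ℂ)/2) = I * Complex.sin ((θ:ℂ)/2) := by
    rw [show (I*(θ:ℂ)/2 : ℂ) = ((θ:ℂ)/2) * I by ring, Complex.sinh_mul_I]; ring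
  rw [exp_pauli3, exp_pauli1, exp_pauli3, hc, hs, Matrix.mul_fin_two, Matrix.mul_fin_two]
  ext i j; fin_cases i <;> fin_cases j <;> simp <;> ring

lemma exp_half (x y : ℝ)
    (h : x = 2*y ∨ x = 2*y + 4*Real.pi ∨ x = 2*y - 4*Real.pi) :
    Complex.exp (Complex.I * (x : ℂ) / 2) = Complex.exp ((y : ℂ) * Complex.I) := by
  rcases h with h | h | h <;> rw [h] <;> push_cast
  · ring_nf
  · rw [show I * (2*(y:ℂ) + 4*(Real.pi:ℂ)) / 2 = (y:ℂ)*I + 2*(Real.pi:ℂ)*I by ring,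
      Complex.exp_add, Complex.exp_two_pi_mul_I, mul_one]
  · rw [show I * (2*(y:ℂ) - 4*(Real.pi:ℂ)) / 2 = (y:ℂ)*I + (-(2*(Real.pi:ℂ)*I) + -(2*(Real.pi:ℂ)*I) + 2*(Real.pi:ℂ)*I) by ring,
      Complex.exp_add]
    rw [show (-(2*(Real.pi:ℂ)*I) + -(2*(Real.pi:ℂ)*I) + 2*(Real.pi:ℂ)*I) = -(2*(Real.pi:ℂ)*I) by ring,
      Complex.exp_neg, Complex.exp_two_pi_mul_I]
    simp

/-- Every element of `SU(2)` admits Euler angles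
`φ ∈ [0,2π]`, `θ ∈ [0,π]`, `ψ ∈ [0,4π]` with
`A = exp(iφσ₃/2)·exp(iθσ₁/2)·exp(iψσ₃/2)`. -/
theorem su2_euler_surjective (A : Matrix.specialUnitaryGroup (Fin 2) ℂ) :
    ∃ φ ∈ Set.Icc (0 : ℝ) (2 * Real.pi),
      ∃ θ ∈ Set.Icc (0 : ℝ) Real.pi,
        ∃ ψ ∈ Set.Icc (0 : ℝ) (4 * Real.pi),
          (A : Matrix (Fin 2) (Fin 2) ℂ) =
            NormedSpace.exp ((Complex.I * (φ : ℂ) / 2) • pauli3) *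
              NormedSpace.exp ((Complex.I * (θ : ℂ) / 2) • pauli1) *
              NormedSpace.exp ((Complex.I * (ψ : ℂ) / 2) • pauli3) := by
  obtain ⟨hu, hdet⟩ := Matrix.mem_specialUnitaryGroup_iff.mp A.2
  have hu' : A.1 * star A.1 = 1 := Matrix.mem_unitaryGroup_iff.mp hu
  have hadj : Matrix.adjugate A.1 = star A.1 := by
    have hinv : A.1⁻¹ = star A.1 := Matrix.inv_eq_right_inv hu'
    rw [← hinv, Matrix.inv_def, hdet]; simp
  set a : ℂ := A.1 0 0 with ha_def
  set b : ℂ := A.1 0 1 with hb_def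
  have hadj2 := hadj
  rw [Matrix.adjugate_fin_two] at hadj2
  have h11 : A.1 1 1 = starRingEnd ℂ a := by
    have := Matrix.ext_iff.mpr hadj2 0 0
    simp [Matrix.star_apply] at this
    rw [ha_def]; exact this
  have h10 : A.1 1 0 = -(starRingEnd ℂ b) := by
    have := Matrix.ext_iff.mpr hadj2 0 1
    simp [Matrix.star_apply] at this
    have h := congrArg (starRingEnd ℂ) this
    simp only [Complex.conj_conj, map_neg] at h
    rw [hb_def]; exact h.symm
  have hdet2 : a * starRingEnd ℂ a + b * starRingEnd ℂ b = 1 := by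
    have := hdet
    rw [Matrix.det_fin_two, h11, h10] at this
    linear_combination this
  set r : ℝ := ‖a‖ with hr_def
  set s : ℝ := ‖b‖ with hs_def
  have hrs : r^2 + s^2 = 1 := by
    have h1 : (Complex.normSq a : ℂ) + (Complex.normSq b : ℂ) = 1 := by
      rw [← Complex.mul_conj, ← Complex.mul_conj]; exact hdet2
    have h2 : Complex.normSq a + Complex.normSq b = 1 := by exact_mod_cast h1
    rw [hr_def, hs_def, Complex.sq_norm, Complex.sq_norm]; exact h2
  have hr0 : 0 ≤ r := norm_nonneg a
  have hs0 : 0 ≤ s := norm_nonneg b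
  have hr1 : r ≤ 1 := by nlinarith
  set θ : ℝ := 2 * Real.arccos r with hθ_def
  have hθmem : θ ∈ Set.Icc (0:ℝ) Real.pi := by
    constructor
    · have := Real.arccos_nonneg r
      rw [hθ_def]; linarith
    · have : Real.arccos r ≤ Real.pi / 2 := (Real.arccos_le_pi_div_two).mpr hr0
      rw [hθ_def]; linarith
  have hcosr : Real.cos (θ / 2) = r := by
    rw [hθ_def, show 2 * Real.arccos r / 2 = Real.arccos r by ring,
      Real.cos_arccos (by linarith) hr1]
  have hsins : Real.sin (θ / 2) = s := by
    rw [hθ_def, show 2 * Real.arccos r / 2 = Real.arccos r by ring, Real.sin_arccos,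
      show 1 - r ^ 2 = s ^ 2 by linarith, Real.sqrt_sq hs0]
  have h_cos : Complex.cos ((θ : ℂ) / 2) = (r : ℂ) := by
    rw [show ((θ : ℂ) / 2) = ((θ / 2 : ℝ) : ℂ) by push_cast; ring, ← Complex.ofReal_cos, hcosr]
  have h_sin : Complex.sin ((θ : ℂ) / 2) = (s : ℂ) := by
    rw [show ((θ : ℂ) / 2) = ((θ / 2 : ℝ) : ℂ) by push_cast; ring, ← Complex.ofReal_sin, hsins]
  set α : ℝ := Complex.arg a with hα_def
  set β : ℝ := Complex.arg (-Complex.I * b) with hβ_def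
  have h_a : a = (r : ℂ) * Complex.exp ((α : ℂ) * Complex.I) :=
    (Complex.norm_mul_exp_arg_mul_I a).symm
  have h_b : b = Complex.I * ((s : ℂ) * Complex.exp ((β : ℂ) * Complex.I)) := by
    have h1 : ‖-Complex.I * b‖ = s := by
      rw [norm_mul, hs_def]; simp
    have h2 := Complex.norm_mul_exp_arg_mul_I (-Complex.I * b)
    rw [h1] at h2
    rw [← hβ_def] at h2
    calc b = Complex.I * (-Complex.I * b) := by
            rw [← mul_assoc]; simp
      _ = Complex.I * ((s : ℂ) * Complex.exp ((β : ℂ) * Complex.I)) := by rw [h2]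
  have hαlb : -Real.pi < α := Complex.neg_pi_lt_arg a
  have hαub : α ≤ Real.pi := Complex.arg_le_pi a
  have hβlb : -Real.pi < β := Complex.neg_pi_lt_arg _
  have hβub : β ≤ Real.pi := Complex.arg_le_pi _
  have hπ := Real.pi_pos
  -- choose Euler angles
  set φ : ℝ := if 0 ≤ α + β then α + β else α + β + 2 * Real.pi with hφ_def
  set ψ : ℝ := if 0 ≤ α + β then (if 0 ≤ α - β then α - β else α - β + 4 * Real.pi)
      else α - β + 2 * Real.pi with hψ_def
  have hφmem : φ ∈ Set.Icc (0:ℝ) (2 * Real.pi) := by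
    rw [hφ_def]; split_ifs with h <;> constructor <;> linarith
  have hψmem : ψ ∈ Set.Icc (0:ℝ) (4 * Real.pi) := by
    rw [hψ_def]; split_ifs with h h2 <;> constructor <;> linarith
  have hsum : φ + ψ = 2 * α ∨ φ + ψ = 2 * α + 4 * Real.pi ∨ φ + ψ = 2 * α - 4 * Real.pi := by
    rw [hφ_def, hψ_def]; split_ifs with h h2
    · left; ring
    · right; left; ring
    · right; left; ring
  have hdiff : φ - ψ = 2 * β ∨ φ - ψ = 2 * β + 4 * Real.pi ∨ φ - ψ = 2 * β - 4 * Real.pi := by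
    rw [hφ_def, hψ_def]; split_ifs with h h2
    · left; ring
    · right; right; ring
    · left; ring
  have e_sum : Complex.exp (I*(φ:ℂ)/2) * Complex.exp (I*(ψ:ℂ)/2)
      = Complex.exp ((α : ℂ) * I) := by
    rw [← Complex.exp_add, show I*(φ:ℂ)/2 + I*(ψ:ℂ)/2 = I * ((φ + ψ : ℝ) : ℂ) / 2 by
      push_cast; ring]
    exact exp_half _ _ hsum
  have e_diff : Complex.exp (I*(φ:ℂ)/2) * Complex.exp (-(I*(ψ:ℂ)/2))
      = Complex.exp ((β : ℂ) * I) := by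
    rw [← Complex.exp_add, show I*(φ:ℂ)/2 + -(I*(ψ:ℂ)/2) = I * ((φ - ψ : ℝ) : ℂ) / 2 by
      push_cast; ring]
    exact exp_half _ _ hdiff
  have e_sum' : Complex.exp (-(I*(φ:ℂ)/2)) * Complex.exp (-(I*(ψ:ℂ)/2))
      = Complex.exp (((-α : ℝ) : ℂ) * I) := by
    rw [← Complex.exp_add, show -(I*(φ:ℂ)/2) + -(I*(ψ:ℂ)/2) = I * ((-(φ + ψ) : ℝ) : ℂ) / 2 by
      push_cast; ring]
    apply exp_half
    rcases hsum with h | h | h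
    · left; linarith
    · right; right; linarith
    · right; left; linarith
  have e_diff' : Complex.exp (-(I*(φ:ℂ)/2)) * Complex.exp (I*(ψ:ℂ)/2)
      = Complex.exp (((-β : ℝ) : ℂ) * I) := by
    rw [← Complex.exp_add, show -(I*(φ:ℂ)/2) + I*(ψ:ℂ)/2 = I * ((-(φ - ψ) : ℝ) : ℂ) / 2 by
      push_cast; ring]
    apply exp_half
    rcases hdiff with h | h | h
    · left; linarith
    · right; right; linarith
    · right; left; linarith
  have hEβ : (starRingEnd ℂ) (Complex.exp ((β:ℂ) * I)) = Complex.exp (((-β : ℝ) : ℂ) * I) := by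
    rw [← Complex.exp_conj]; congr 1
    simp [Complex.conj_ofReal]
  have hEα : (starRingEnd ℂ) (Complex.exp ((α:ℂ) * I)) = Complex.exp (((-α : ℝ) : ℂ) * I) := by
    rw [← Complex.exp_conj]; congr 1
    simp [Complex.conj_ofReal]
  have hconjb : (starRingEnd ℂ) b = -I * (s:ℂ) * Complex.exp (((-β : ℝ) : ℂ) * I) := by
    rw [h_b]
    simp only [_root_.map_mul, Complex.conj_I, Complex.conj_ofReal, hEβ]
    ring
  have hconja : (starRingEnd ℂ) a = (r:ℂ) * Complex.exp (((-α : ℝ) : ℂ) * I) := by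
    rw [h_a]
    simp only [_root_.map_mul, Complex.conj_ofReal, hEα]
  refine ⟨φ, hφmem, θ, hθmem, ψ, hψmem, ?_⟩
  rw [euler_prod]
  have hA : (A : Matrix (Fin 2) (Fin 2) ℂ) = !![a, b; -(starRingEnd ℂ b), starRingEnd ℂ a] := by
    ext i j; fin_cases i <;> fin_cases j <;> simp [h10, h11, ha_def, hb_def]
  rw [hA]
  ext i j; fin_cases i <;> fin_cases j <;> simp [h_cos, h_sin]
  · linear_combination h_a - (r:ℂ) * e_sum
  · linear_combination h_b - I * (s:ℂ) * e_diff
  · linear_combination -hconjb - I * (s:ℂ) * e_diff'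
  · linear_combination hconja - (r:ℂ) * e_sum'
end

section
/- If 0 < x₇ < π/6 and 3x₇ < x₈ < π/2, then f(2x₇, 2x₈) > 0, where f(α,β) = sin((β−α)/2)·sin((β+α)/2)·sin((β−3α)/2)·sin((β+3α)/2)·sin α·sin β. (Hence the region 0 ≤ x₇ ≤ π/6, 3x₇ ≤ x₈ ≤ π/2 is a fundamental region where the G₂ Haar-measure density is positive.) -/
open Real

/-- On the fundamental region `0 < x₇ < π/6`, `3x₇ < x₈ < π/2`,
the `G₂` Haar-measure density `f(2x₇, 2x₈)` is strictly positive, where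
`f(α,β) = sin((β−α)/2)·sin((β+α)/2)·sin((β−3α)/2)·sin((β+3α)/2)·sin α·sin β`. -/
theorem g2_weight_pos_on_fundamental_region (x₇ x₈ : ℝ)
    (h₁ : 0 < x₇) (h₂ : x₇ < π / 6) (h₃ : 3 * x₇ < x₈) (h₄ : x₈ < π / 2) :
    sin ((2 * x₈ - 2 * x₇) / 2) * sin ((2 * x₈ + 2 * x₇) / 2) *
        sin ((2 * x₈ - 3 * (2 * x₇)) / 2) * sin ((2 * x₈ + 3 * (2 * x₇)) / 2) *
        sin (2 * x₇) * sin (2 * x₈) > 0 := by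
  have hπ : 0 < π := pi_pos
  have a1 := sin_pos_of_pos_of_lt_pi (x := (2 * x₈ - 2 * x₇) / 2) (by linarith) (by linarith)
  have a2 := sin_pos_of_pos_of_lt_pi (x := (2 * x₈ + 2 * x₇) / 2) (by linarith) (by linarith)
  have a3 := sin_pos_of_pos_of_lt_pi (x := (2 * x₈ - 3 * (2 * x₇)) / 2) (by linarith) (by linarith)
  have a4 := sin_pos_of_pos_of_lt_pi (x := (2 * x₈ + 3 * (2 * x₇)) / 2) (by linarith) (by linarith)
  have a5 := sin_pos_of_pos_of_lt_pi (x := 2 * x₇) (by linarith) (by linarith)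
  have a6 := sin_pos_of_pos_of_lt_pi (x := 2 * x₈) (by linarith) (by linarith)
  positivity
end

section
/- The volume of the compact Lie group G₂ computed from the SO(4)-Euler parametrization equals 9√3·π⁸/20; concretely, the iterated integral ∫₀^{2π}dx₁ ∫₀^{π/4}dx₂ ∫₀^{π}dx₃ ∫₀^{π}dx₄ ∫₀^{π/2}dx₅ ∫₀^{π/2}dx₆ ∫₀^{π/6}dx₇ ∫_{3x₇}^{π/2}dx₈ ∫₀^{2π}dx₉ ∫₀^{π/2}dx₁₀ ∫₀^{π}dx₁₁ ∫₀^{π}dx₁₂ ∫₀^{π/2}dx₁₃ ∫₀^{π}dx₁₄ of 27√3·f(2x₇,2x₈)·sin(2x₂)·sin(2x₅)·sin(2x₁₀)·sin(2x₁₃) equals 9√3·π⁸/20. -/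
open Real

/-- The weight function of the `G₂` Haar measure in the `SO(4)`-Euler
parametrization. -/
noncomputable def g2f (α β : ℝ) : ℝ :=
  sin ((β - α) / 2) * sin ((β + α) / 2) * sin ((β - 3 * α) / 2) *
    sin ((β + 3 * α) / 2) * sin α * sin β

lemma hasDerivAt_cos_two_mul (b : ℝ) :
    HasDerivAt (fun y : ℝ => cos (2 * y)) (-2 * sin (2 * b)) b := by
  have := (Real.hasDerivAt_cos (2 * b)).comp b ((hasDerivAt_id b).const_mul 2)
  simpa [Function.comp_def, mul_comm] using this

lemma sin_two_int (c : ℝ) :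
    (∫ x in (0:ℝ)..c, sin (2 * x)) = (1 - cos (2 * c)) / 2 := by
  have h : ∀ x ∈ Set.uIcc (0:ℝ) c,
      HasDerivAt (fun y : ℝ => (1 - cos (2 * y)) / 2) (sin (2 * x)) x := by
    intro x _
    have := ((hasDerivAt_const x (1:ℝ)).sub (hasDerivAt_cos_two_mul x)).div_const 2
    refine this.congr_deriv ?_
    ring
  rw [intervalIntegral.integral_eq_sub_of_hasDerivAt h
    (Continuous.intervalIntegrable (by fun_prop) _ _)]
  norm_num

lemma sin_two_int_half : (∫ x in (0:ℝ)..(π / 2), sin (2 * x)) = 1 := by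
  rw [sin_two_int, show 2 * (π / 2) = π by ring, Real.cos_pi]
  norm_num

lemma sin_two_int_quarter : (∫ x in (0:ℝ)..(π / 4), sin (2 * x)) = 1 / 2 := by
  rw [sin_two_int, show 2 * (π / 4) = π / 2 by ring, Real.cos_pi_div_two]
  norm_num

lemma g2f_eq (a b : ℝ) :
    g2f (2 * a) (2 * b) =
      (cos (2 * a) - cos (2 * b)) * (cos (6 * a) - cos (2 * b)) / 4 *
        (sin (2 * a) * sin (2 * b)) := by
  have h1 := Real.cos_sub_cos (2 * a) (2 * b)
  have h2 := Real.cos_sub_cos (6 * a) (2 * b)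
  rw [show (2 * a + 2 * b) / 2 = a + b by ring,
      show (2 * a - 2 * b) / 2 = -(b - a) by ring, Real.sin_neg] at h1
  rw [show (6 * a + 2 * b) / 2 = 3 * a + b by ring,
      show (6 * a - 2 * b) / 2 = -(b - 3 * a) by ring, Real.sin_neg] at h2
  unfold g2f
  rw [show (2 * b - 2 * a) / 2 = b - a by ring,
      show (2 * b + 2 * a) / 2 = b + a by ring,
      show (2 * b - 3 * (2 * a)) / 2 = b - 3 * a by ring,
      show (2 * b + 3 * (2 * a)) / 2 = b + 3 * a by ring, h1, h2,
      show a + b = b + a by ring, show 3 * a + b = b + 3 * a by ring]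
  ring

lemma inner_int (a : ℝ) :
    (∫ b in (3 * a)..(π / 2), g2f (2 * a) (2 * b)) =
      sin (2 * a) / 8 * (cos (2 * a) * cos (6 * a) + cos (2 * a) / 2 +
        cos (6 * a) / 2 + 1 / 3 + cos (2 * a) * cos (6 * a) ^ 2 / 2 -
        cos (6 * a) ^ 3 / 6) := by
  have h : ∀ b ∈ Set.uIcc (3 * a) (π / 2),
      HasDerivAt (fun y : ℝ => -(sin (2 * a) / 8) *
        (cos (2 * a) * cos (6 * a) * cos (2 * y) -
          (cos (2 * a) + cos (6 * a)) * cos (2 * y) ^ 2 / 2 +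
          cos (2 * y) ^ 3 / 3)) (g2f (2 * a) (2 * b)) b := by
    intro b _
    have hc := hasDerivAt_cos_two_mul b
    have T := (((hc.const_mul (cos (2 * a) * cos (6 * a))).sub
      (((hc.pow 2).const_mul (cos (2 * a) + cos (6 * a))).div_const 2)).add
      ((hc.pow 3).div_const 3)).const_mul (-(sin (2 * a) / 8))
    refine T.congr_deriv ?_
    rw [g2f_eq]
    ring
  rw [intervalIntegral.integral_eq_sub_of_hasDerivAt h
    (Continuous.intervalIntegrable (by unfold g2f; fun_prop) _ _),
    show 2 * (π / 2) = π by ring, Real.cos_pi, show 2 * (3 * a) = 6 * a by ring]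
  ring

lemma outer_int :
    (∫ a in (0:ℝ)..(π / 6),
      sin (2 * a) / 8 * (cos (2 * a) * cos (6 * a) + cos (2 * a) / 2 +
        cos (6 * a) / 2 + 1 / 3 + cos (2 * a) * cos (6 * a) ^ 2 / 2 -
        cos (6 * a) ^ 3 / 6)) = 1 / 60 := by
  have h : ∀ a ∈ Set.uIcc (0:ℝ) (π / 6),
      HasDerivAt (fun x : ℝ => -1 / 48 * cos (2 * x) + 1 / 32 * cos (2 * x) ^ 2 +
        1 / 16 * cos (2 * x) ^ 3 - 11 / 64 * cos (2 * x) ^ 4 -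
        1 / 20 * cos (2 * x) ^ 5 + 5 / 16 * cos (2 * x) ^ 6 -
        1 / 4 * cos (2 * x) ^ 8 + 1 / 15 * cos (2 * x) ^ 10)
      (sin (2 * a) / 8 * (cos (2 * a) * cos (6 * a) + cos (2 * a) / 2 +
        cos (6 * a) / 2 + 1 / 3 + cos (2 * a) * cos (6 * a) ^ 2 / 2 -
        cos (6 * a) ^ 3 / 6)) a := by
    intro a _
    have hc := hasDerivAt_cos_two_mul a
    have T := (((((((hc.const_mul (-1 / 48 : ℝ)).add
      ((hc.pow 2).const_mul (1 / 32 : ℝ))).add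
      ((hc.pow 3).const_mul (1 / 16 : ℝ))).sub
      ((hc.pow 4).const_mul (11 / 64 : ℝ))).sub
      ((hc.pow 5).const_mul (1 / 20 : ℝ))).add
      ((hc.pow 6).const_mul (5 / 16 : ℝ))).sub
      ((hc.pow 8).const_mul (1 / 4 : ℝ))).add
      ((hc.pow 10).const_mul (1 / 15 : ℝ))
    refine T.congr_deriv ?_
    rw [show (6 : ℝ) * a = 3 * (2 * a) by ring, Real.cos_three_mul]
    ring
  rw [intervalIntegral.integral_eq_sub_of_hasDerivAt h
    (Continuous.intervalIntegrable (by fun_prop) _ _),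
    show 2 * (π / 6) = π / 3 by ring, Real.cos_pi_div_three,
    show (2:ℝ) * 0 = 0 by ring, Real.cos_zero]
  norm_num

lemma double_int :
    (∫ a in (0:ℝ)..(π / 6), ∫ b in (3 * a)..(π / 2), g2f (2 * a) (2 * b)) =
      1 / 60 := by
  simp only [inner_int]
  exact outer_int

/-- The total Haar volume of the compact Lie group `G₂`,
computed as a 14-fold iterated integral in the `SO(4)`-Euler parametrization,
equals `9√3·π⁸/20`. -/
theorem g2_volume :
    (∫ x₁ in (0:ℝ)..(2 * π), ∫ x₂ in (0:ℝ)..(π / 4), ∫ x₃ in (0:ℝ)..π,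
      ∫ x₄ in (0:ℝ)..π, ∫ x₅ in (0:ℝ)..(π / 2), ∫ x₆ in (0:ℝ)..(π / 2),
      ∫ x₇ in (0:ℝ)..(π / 6), ∫ x₈ in (3 * x₇)..(π / 2),
      ∫ x₉ in (0:ℝ)..(2 * π), ∫ x₁₀ in (0:ℝ)..(π / 2), ∫ x₁₁ in (0:ℝ)..π,
      ∫ x₁₂ in (0:ℝ)..π, ∫ x₁₃ in (0:ℝ)..(π / 2), ∫ x₁₄ in (0:ℝ)..π,
        27 * Real.sqrt 3 * g2f (2 * x₇) (2 * x₈) *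
          sin (2 * x₂) * sin (2 * x₅) * sin (2 * x₁₀) * sin (2 * x₁₃)) =
      9 * Real.sqrt 3 * π ^ 8 / 20 := by
  have rearr : ∀ g s2 s5 s10 s13 : ℝ,
      27 * Real.sqrt 3 * g * s2 * s5 * s10 * s13 =
        s13 * (s10 * (s5 * (s2 * (27 * Real.sqrt 3 * g)))) := by
    intros; ring
  simp only [rearr, intervalIntegral.integral_const, smul_eq_mul,
    intervalIntegral.integral_const_mul, intervalIntegral.integral_mul_const,
    sin_two_int_half, sin_two_int_quarter, double_int, sub_zero, mul_one, one_mul]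
  ring
end

section
/- The volume of the compact Lie group F₄, computed as the 52-fold iterated integral of the Haar measure density in the Spin(9)-Euler parametrization, equals 2²⁶·π²⁸/(3⁷·5⁴·7²·11). Concretely: let D(x₁,…,x₁₆) = 2⁷·cos⁷(x₁₆/2)·sin¹⁵(x₁₆/2)·sin x₄·cos x₅·cos x₆·sin²x₆·cos⁴x₇·sin²x₇·sin⁷x₈·sin x₁₂·cos x₁₃·cos x₁₄·sin²x₁₄·cos²x₁₅·sin⁴x₁₅ and let S(y₁,…,y₃₆) = sin y₄·cos y₅·cos y₆·sin²y₆·cos⁴y₇·sin²y₇·sin⁷y₈·sin y₁₂·cos y₁₃·cos y₁₄·sin²y₁₄·cos²y₁₅·sin⁴y₁₅·sin y₁₇·cos²y₁₈·cos³y₁₉·cos⁴y₂₀·sin⁵y₂₁·sin y₂₃·cos²y₂₄·cos³y₂₅·sin⁴y₂₆·sin y₂₈·cos²y₂₉·sin³y₃₀·sin y₃₂·sin²y₃₃·sin y₃₅. Then (∫ D over the region x₁,x₂,x₃ ∈ [0,2π], x₄ ∈ [0,π], x₅ ∈ [−π/2,π/2], x₆,x₇ ∈ [0,π/2], x₈ ∈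 [0,π], x₉,x₁₀,x₁₁ ∈ [0,2π], x₁₂ ∈ [0,π], x₁₃ ∈ [−π/2,π/2], x₁₄,x₁₅ ∈ [0,π/2], x₁₆ ∈ [0,π]) × (∫ S over the region yᵢ ∈ [0,2π] for i ∈ {1,2,3,9,10,11,16,22,27,31,34}, yᵢ ∈ [0,π] for i ∈ {4,8,12,17,21,23,26,28,30,32,33,35}, yᵢ ∈ [−π/2,π/2] for i ∈ {5,13,18,19,20,24,25,29}, yᵢ ∈ [0,π/2] for i ∈ {6,7,14,15}, and y₃₆ ∈ [0,4π]) = 2²⁶·π²⁸/(3⁷·5⁴·7²·11). -/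
open Real


section F4Aux

open intervalIntegral

private lemma f4_isin1 : ∫ x in (0:ℝ)..π, sin x = 2 := by norm_num
private lemma f4_isin2 : ∫ x in (0:ℝ)..π, sin x ^ 2 = π / 2 := by norm_num
private lemma f4_isin3 : ∫ x in (0:ℝ)..π, sin x ^ 3 = 4 / 3 := by norm_num
private lemma f4_isin4 : ∫ x in (0:ℝ)..π, sin x ^ 4 = 3 * π / 8 := by
  have := integral_sin_pow_even (n := 2)
  norm_num [Finset.prod_range_succ] at this ⊢; linarith
private lemma f4_isin5 : ∫ x in (0:ℝ)..π, sin x ^ 5 = 16 / 15 := by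
  have := integral_sin_pow_odd (n := 2)
  norm_num [Finset.prod_range_succ] at this ⊢; linarith
private lemma f4_isin7 : ∫ x in (0:ℝ)..π, sin x ^ 7 = 32 / 35 := by
  have := integral_sin_pow_odd (n := 3)
  norm_num [Finset.prod_range_succ] at this ⊢; linarith
private lemma f4_icos1 : ∫ x in (-(π/2))..(π/2), cos x = 2 := by norm_num
private lemma f4_icos2 : ∫ x in (-(π/2))..(π/2), cos x ^ 2 = π / 2 := by norm_num
private lemma f4_icos3 : ∫ x in (-(π/2))..(π/2), cos x ^ 3 = 4 / 3 := by norm_num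
private lemma f4_icos4 : ∫ x in (-(π/2))..(π/2), cos x ^ 4 = 3 * π / 8 := by
  have := integral_cos_pow (a := -(π/2)) (b := π/2) (n := 2)
  norm_num [f4_icos2] at this ⊢; linarith
private lemma f4_hcos2 : ∫ x in (0:ℝ)..(π/2), cos x ^ 2 = π / 4 := by norm_num; ring
private lemma f4_hcos4 : ∫ x in (0:ℝ)..(π/2), cos x ^ 4 = 3 * π / 16 := by
  have := integral_cos_pow (a := (0:ℝ)) (b := π/2) (n := 2)
  norm_num [f4_hcos2] at this ⊢; linarith
private lemma f4_hcos6 : ∫ x in (0:ℝ)..(π/2), cos x ^ 6 = 5 * π / 32 := by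
  have := integral_cos_pow (a := (0:ℝ)) (b := π/2) (n := 4)
  norm_num [f4_hcos4] at this ⊢; linarith

private lemma f4_m6 : ∫ x in (0:ℝ)..(π/2), cos x * sin x ^ 2 = 1 / 3 := by
  have h : ∀ x : ℝ, cos x * sin x ^ 2 = sin x ^ 2 * cos x ^ (2 * 0 + 1) := by intro x; ring
  simp only [h, integral_sin_pow_mul_cos_pow_odd]
  norm_num [integral_pow]

private lemma f4_m7 : ∫ x in (0:ℝ)..(π/2), cos x ^ 4 * sin x ^ 2 = π / 32 := by
  have h : ∀ x : ℝ, cos x ^ 4 * sin x ^ 2 = cos x ^ 4 - cos x ^ 6 := by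
    intro x; linear_combination (cos x ^ 4) * sin_sq_add_cos_sq x
  simp only [h]
  rw [intervalIntegral.integral_sub (f := fun x => cos x ^ 4) (g := fun x => cos x ^ 6) ((continuous_cos.pow 4).intervalIntegrable 0 (π/2))
    ((continuous_cos.pow 6).intervalIntegrable 0 (π/2)), f4_hcos4, f4_hcos6]
  ring

private lemma f4_m15 : ∫ x in (0:ℝ)..(π/2), cos x ^ 2 * sin x ^ 4 = π / 32 := by
  have h : ∀ x : ℝ, cos x ^ 2 * sin x ^ 4 = cos x ^ 2 - 2 * cos x ^ 4 + cos x ^ 6 := by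
    intro x
    linear_combination (cos x ^ 2 * (sin x ^ 2 + 1 - cos x ^ 2)) * sin_sq_add_cos_sq x
  simp only [h]
  rw [intervalIntegral.integral_add (f := fun x => cos x ^ 2 - 2 * cos x ^ 4) (g := fun x => cos x ^ 6) (((continuous_cos.pow 2).intervalIntegrable 0 (π/2)).sub
      (((continuous_cos.pow 4).intervalIntegrable 0 (π/2)).const_mul 2))
    ((continuous_cos.pow 6).intervalIntegrable 0 (π/2)),
    intervalIntegral.integral_sub (f := fun x => cos x ^ 2) (g := fun x => 2 * cos x ^ 4) ((continuous_cos.pow 2).intervalIntegrable 0 (π/2))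
      (((continuous_cos.pow 4).intervalIntegrable 0 (π/2)).const_mul 2),
    intervalIntegral.integral_const_mul, f4_hcos2, f4_hcos4, f4_hcos6]
  ring

private lemma f4_m16 : ∫ x in (0:ℝ)..π, cos (x / 2) ^ 7 * sin (x / 2) ^ 15 = 1 / 1320 := by
  rw [intervalIntegral.integral_comp_div (f := fun x => cos x ^ 7 * sin x ^ 15) two_ne_zero]
  have h : ∀ x : ℝ, cos x ^ 7 * sin x ^ 15 = sin x ^ 15 * cos x ^ (2 * 3 + 1) := by
    intro x; ring
  simp only [h, integral_sin_pow_mul_cos_pow_odd]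
  rw [show (0:ℝ)/2 = 0 by norm_num, show Real.sin 0 = 0 by simp, show Real.sin (π/2) = 1 by simp]
  have h2 : ∀ u : ℝ, u ^ 15 * ((1:ℝ) - u ^ 2) ^ 3
      = u ^ 15 - 3 * u ^ 17 + 3 * u ^ 19 - u ^ 21 := by intro u; ring
  simp only [h2]
  rw [intervalIntegral.integral_sub, intervalIntegral.integral_add,
    intervalIntegral.integral_sub, intervalIntegral.integral_const_mul,
    intervalIntegral.integral_const_mul]
  · norm_num [integral_pow]
  all_goals apply Continuous.intervalIntegrable; fun_prop

private lemma f4_c6 (a : ℝ) :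
    ∫ x in (0:ℝ)..(π/2), cos x * (sin x ^ 2 * a) = 1 / 3 * a := by
  simp only [← mul_assoc]
  rw [intervalIntegral.integral_mul_const, f4_m6]

private lemma f4_c7 (a : ℝ) :
    ∫ x in (0:ℝ)..(π/2), cos x ^ 4 * (sin x ^ 2 * a) = π / 32 * a := by
  simp only [← mul_assoc]
  rw [intervalIntegral.integral_mul_const, f4_m7]

private lemma f4_c15 (a : ℝ) :
    ∫ x in (0:ℝ)..(π/2), cos x ^ 2 * (sin x ^ 4 * a) = π / 32 * a := by
  simp only [← mul_assoc]
  rw [intervalIntegral.integral_mul_const, f4_m15]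

private lemma f4_c16 (a : ℝ) :
    ∫ x in (0:ℝ)..π, cos (x / 2) ^ 7 * (sin (x / 2) ^ 15 * a) = 1 / 1320 * a := by
  simp only [← mul_assoc]
  rw [intervalIntegral.integral_mul_const, f4_m16]

end F4Aux

/-- The total Haar volume of the compact Lie group `F₄` in the
`Spin(9)`-Euler parametrization: the product of the 16-fold integral of the coset
density `D` and the 36-fold integral of the `Spin(9)` Haar density `S` equals
`2²⁶·π²⁸/(3⁷·5⁴·7²·11)`. -/

theorem f4_volume :
    (∫ x1 in (0:ℝ)..(2 * π), ∫ x2 in (0:ℝ)..(2 * π), ∫ x3 in (0:ℝ)..(2 * π), ∫ x4 in (0:ℝ)..π, ∫ x5 in (-(π / 2))..(π / 2), ∫ x6 in (0:ℝ)..(π / 2), ∫ x7 in (0:ℝ)..(π / 2), ∫ x8 in (0:ℝ)..π, ∫ x9 in (0:ℝ)..(2 * π), ∫ x10 in (0:ℝ)..(2 * π), ∫ x11 in (0:ℝ)..(2 * π), ∫ x12 in (0:ℝ)..π, ∫ x13 in (-(π / 2))..(π / 2), ∫ x14 in (0:ℝ)..(π / 2), ∫ x15 in (0:ℝ)..(π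 / 2), ∫ x16 in (0:ℝ)..π, 2 ^ 7 * cos (x16 / 2) ^ 7 * sin (x16 / 2) ^ 15 * sin x4 * cos x5 * cos x6 * sin x6 ^ 2 * cos x7 ^ 4 * sin x7 ^ 2 * sin x8 ^ 7 * sin x12 * cos x13 * cos x14 * sin x14 ^ 2 * cos x15 ^ 2 * sin x15 ^ 4) *
      (∫ y1 in (0:ℝ)..(2 * π), ∫ y2 in (0:ℝ)..(2 * π), ∫ y3 in (0:ℝ)..(2 * π), ∫ y4 in (0:ℝ)..π, ∫ y5 in (-(π / 2))..(π / 2), ∫ y6 in (0:ℝ)..(π / 2), ∫ y7 in (0:ℝ)..(π / 2), ∫ y8 in (0:ℝ)..π, ∫ y9 in (0:ℝ)..(2 * π), ∫ y10 in (0:ℝ)..(2 * π), ∫ y11 in (0:ℝ)..(2 * π), ∫ y12 in (0:ℝ)..π, ∫ y13 in (-(π / 2))..(π / 2), ∫ y14 in (0:ℝ)..(π / 2), ∫ y15 in (0:ℝ)..(π / 2), ∫ y16 in (0:ℝ)..(2 * π), ∫ y17 in (0:ℝ)..π, ∫ y18 in (-(π / 2))..(π / 2), ∫ y19 in (-(π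 / 2))..(π / 2), ∫ y20 in (-(π / 2))..(π / 2), ∫ y21 in (0:ℝ)..π, ∫ y22 in (0:ℝ)..(2 * π), ∫ y23 in (0:ℝ)..π, ∫ y24 in (-(π / 2))..(π / 2), ∫ y25 in (-(π / 2))..(π / 2), ∫ y26 in (0:ℝ)..π, ∫ y27 in (0:ℝ)..(2 * π), ∫ y28 in (0:ℝ)..π, ∫ y29 in (-(π / 2))..(π / 2), ∫ y30 in (0:ℝ)..π, ∫ y31 in (0:ℝ)..(2 * π), ∫ y32 in (0:ℝ)..π, ∫ y33 in (0:ℝ)..π, ∫ y34 in (0:ℝ)..(2 * π), ∫ y35 in (0:ℝ)..π, ∫ y36 in (0:ℝ)..(4 * π), sin y4 * cos y5 * cos y6 * sin y6 ^ 2 * cos y7 ^ 4 * sin y7 ^ 2 * sin y8 ^ 7 * sin y12 * cos y13 * cos y14 * sin y14 ^ 2 * cos y15 ^ 2 * sin y15 ^ 4 * sin y17 * cos y18 ^ 2 * cos y19 ^ 3 * cos y20 ^ 4 * sin y21 ^ 5 * sin y23 * cos y24 ^ 2 * cos y25 ^ 3 * sin y26 ^ 4 * sin y28 * cos y29 ^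 2 * sin y30 ^ 3 * sin y32 * sin y33 ^ 2 * sin y35) =
      2 ^ 26 * π ^ 28 / (3 ^ 7 * 5 ^ 4 * 7 ^ 2 * 11) := by
  simp only [mul_assoc]
  simp only [intervalIntegral.integral_const, smul_eq_mul, sub_zero,
    intervalIntegral.integral_const_mul, intervalIntegral.integral_mul_const,
    f4_c6, f4_c7, f4_c15, f4_c16, f4_m6, f4_m7, f4_m15, f4_m16,
    f4_isin1, f4_isin2, f4_isin3, f4_isin4, f4_isin5, f4_isin7,
    f4_icos1, f4_icos2, f4_icos3, f4_icos4]
  ring_nf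
end
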